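/- Let k be an algebraically closed field of characteristic p > 0, n a natural number, and L : (Fin n → k) →ₗ[k] (Fin n → k) a k-linear map. Then the map τ : (Fin n → k) → (Fin n → k) defined by τ(v) = (fun i => (v i)^p) + L(v) (componentwise p-th power Frobenius plus the linear map L) is surjective. -/

import Mathlib

open MvPolynomial

namespace FrobLinAux

variable {k : Type*} [Field k] {n : ℕ}

/-- All monomials of `u` have total degree `< N`. -/
def DegLt (N : ℕ) (u : MvPolynomial (Fin n) k) : Prop :=
  ∀ m ∈ u.support, (∑ i, m i) < N

lemma degLt_mono {N N' : ℕ} {u : MvPolynomial (Fin n) k} (h : N ≤ N') (hu : DegLt N u) :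
    DegLt N' u := fun m hm => lt_of_lt_of_le (hu m hm) h

lemma degLt_zero (N : ℕ) : DegLt N (0 : MvPolynomial (Fin n) k) := by
  intro m hm
  simp at hm

lemma degLt_add {N : ℕ} {u v : MvPolynomial (Fin n) k} (hu : DegLt N u) (hv : DegLt N v) :
    DegLt N (u + v) := by
  classical
  intro m hm
  rcases Finset.mem_union.mp (MvPolynomial.support_add hm) with h | h
  · exact hu m h
  · exact hv m h

lemma degLt_sum {α : Type*} {N : ℕ} {s : Finset α} {f : α → MvPolynomial (Fin n) k}
    (h : ∀ a ∈ s, DegLt N (f a)) : DegLt N (∑ a ∈ s, f a) := by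
  classical
  induction s using Finset.induction_on with
  | empty => simpa using degLt_zero N
  | insert _ _ hi ih =>
    rename_i a s
    rw [Finset.sum_insert hi]
    exact degLt_add (h a (Finset.mem_insert_self a s))
      (ih fun b hb => h b (Finset.mem_insert_of_mem hb))

lemma degLt_mul_le {D N : ℕ} {u v : MvPolynomial (Fin n) k}
    (hu : ∀ m ∈ u.support, (∑ i, m i) ≤ D) (hv : DegLt N v) : DegLt (D + N) (u * v) := by
  classical
  intro m hm
  obtain ⟨m₁, hm₁, m₂, hm₂, rfl⟩ := Finset.mem_add.mp (MvPolynomial.support_mul u v hm)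
  have : ∑ i, (m₁ + m₂) i = (∑ i, m₁ i) + ∑ i, m₂ i := by
    simp [Finsupp.add_apply, Finset.sum_add_distrib]
  rw [this]
  exact add_lt_add_of_le_of_lt (hu m₁ hm₁) (hv m₂ hm₂)

lemma degLt_mul {N N' : ℕ} {u v : MvPolynomial (Fin n) k}
    (hu : DegLt N u) (hv : DegLt N' v) : DegLt (N + N') (u * v) := by
  classical
  intro m hm
  obtain ⟨m₁, hm₁, m₂, hm₂, rfl⟩ := Finset.mem_add.mp (MvPolynomial.support_mul u v hm)
  have : ∑ i, (m₁ + m₂) i = (∑ i, m₁ i) + ∑ i, m₂ i := by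
    simp [Finsupp.add_apply, Finset.sum_add_distrib]
  rw [this]
  exact add_lt_add (hu m₁ hm₁) (hv m₂ hm₂)

lemma degLe_monomial (a : Fin n →₀ ℕ) (c : k) :
    ∀ m ∈ (monomial a c : MvPolynomial (Fin n) k).support, (∑ i, m i) ≤ ∑ i, a i := by
  classical
  intro m hm
  rw [MvPolynomial.support_monomial] at hm
  split_ifs at hm with h
  · simp at hm
  · simp only [Finset.mem_singleton] at hm
    subst hm; exact le_rfl

variable (p : ℕ) (M : Fin n → Fin n → k)

/-- The linear part. -/
noncomputable def ell (i : Fin n) : MvPolynomial (Fin n) k :=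
  ∑ j, C (M i j) * X j

/-- The polynomials defining the Frobenius-plus-linear map. -/
noncomputable def gpoly (i : Fin n) : MvPolynomial (Fin n) k :=
  X i ^ p + ell M i

lemma eval_gpoly (v : Fin n → k) (i : Fin n) :
    eval v (gpoly p M i) = v i ^ p + ∑ j, M i j * v j := by
  simp [gpoly, ell]

lemma degLt_ell (i : Fin n) : DegLt 2 (ell M i) := by
  apply degLt_sum
  intro j _
  intro m hm
  have h : C (M i j) * X j = (monomial (Finsupp.single j 1) (M i j) : MvPolynomial (Fin n) k) := by
    rw [← MvPolynomial.C_mul_X_pow_eq_monomial, pow_one]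
  rw [h] at hm
  have := degLe_monomial (Finsupp.single j 1) (M i j) m hm
  have h1 : (∑ i, (Finsupp.single j 1 : Fin n →₀ ℕ) i) = 1 := by
    simp [Finsupp.single_apply]
  omega

lemma degLe_X_pow (i : Fin n) (e : ℕ) :
    ∀ m ∈ (X i ^ e : MvPolynomial (Fin n) k).support, (∑ l, m l) ≤ e := by
  intro m hm
  rw [MvPolynomial.X_pow_eq_monomial] at hm
  have := degLe_monomial (Finsupp.single i e) (1 : k) m hm
  have h1 : (∑ l, (Finsupp.single i e : Fin n →₀ ℕ) l) = e := by
    simp [Finsupp.single_apply]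
  omega

lemma gpoly_pow (hp2 : 2 ≤ p) (i : Fin n) (e : ℕ) :
    ∃ r : MvPolynomial (Fin n) k,
      gpoly p M i ^ e = X i ^ (p * e) + r ∧ DegLt (p * e) r := by
  induction e with
  | zero => exact ⟨0, by simp, degLt_zero 0⟩
  | succ e ih =>
    obtain ⟨r, hr, hdeg⟩ := ih
    refine ⟨X i ^ (p * e) * ell M i + r * X i ^ p + r * ell M i, ?_, ?_⟩
    · have hXX : (X i ^ (p * e) : MvPolynomial (Fin n) k) * X i ^ p = X i ^ (p * (e + 1)) := by
        rw [← pow_add, mul_add, mul_one]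
      rw [pow_succ, hr, gpoly, ← hXX]
      ring
    · have h1 : DegLt (p * e + p) (X i ^ (p * e) * ell M i) := by
        have := degLt_mul_le (degLe_X_pow i (p * e)) (degLt_ell M i)
        exact degLt_mono (by omega) this
      have h2 : DegLt (p * e + p) (r * X i ^ p) := by
        have h2' := degLt_mul_le (degLe_X_pow i p) hdeg
        rw [mul_comm (X i ^ p) r] at h2'
        exact degLt_mono (by omega) h2'
      have h3 : DegLt (p * e + p) (r * ell M i) := by
        have := degLt_mul hdeg (degLt_ell M i)
        exact degLt_mono (by omega) this
      have : p * (e + 1) = p * e + p := by ring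
      rw [this]
      exact degLt_add (degLt_add h1 h2) h3

lemma gpoly_prod (hp2 : 2 ≤ p) (b : Fin n →₀ ℕ) (s : Finset (Fin n)) :
    ∃ r : MvPolynomial (Fin n) k,
      (∏ i ∈ s, gpoly p M i ^ b i)
        = monomial (∑ i ∈ s, Finsupp.single i (p * b i)) 1 + r ∧
      DegLt (∑ i ∈ s, p * b i) r := by
  classical
  induction s using Finset.induction_on with
  | empty => exact ⟨0, by simp, degLt_zero 0⟩
  | insert _ _ hi ih =>
    rename_i a s
    obtain ⟨r, hr, hdeg⟩ := ih
    obtain ⟨r₁, hr₁, hdeg₁⟩ := gpoly_pow p M hp2 a (b a)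
    set μ : Fin n →₀ ℕ := ∑ i ∈ s, Finsupp.single i (p * b i) with hμ
    have hsumμ : ∀ m ∈ (monomial μ (1:k) : MvPolynomial (Fin n) k).support,
        (∑ l, m l) ≤ ∑ i ∈ s, p * b i := by
      intro m hm
      have := degLe_monomial μ (1:k) m hm
      have hμs : (∑ l, μ l) = ∑ i ∈ s, p * b i := by
        rw [hμ]
        simp only [Finsupp.finset_sum_apply, Finsupp.single_apply]
        rw [Finset.sum_comm]
        apply Finset.sum_congr rfl
        intro i _
        simp [Finset.sum_ite_eq]
      omega
    refine ⟨X a ^ (p * b a) * r + r₁ * monomial μ 1 + r₁ * r, ?_, ?_⟩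
    · have hmm : (monomial (Finsupp.single a (p * b a)) (1:k)) * monomial μ 1
          = monomial (Finsupp.single a (p * b a) + μ) 1 := by
        rw [MvPolynomial.monomial_mul, one_mul]
      rw [Finset.prod_insert hi, Finset.sum_insert hi, hr, hr₁,
        MvPolynomial.X_pow_eq_monomial, ← hμ, ← hmm]
      ring
    · rw [Finset.sum_insert hi]
      have h1 : DegLt (p * b a + ∑ i ∈ s, p * b i) (X a ^ (p * b a) * r) :=
        degLt_mul_le (degLe_X_pow a (p * b a)) hdeg
      have h2 : DegLt (p * b a + ∑ i ∈ s, p * b i) (r₁ * monomial μ 1) := by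
        have h2' := degLt_mul_le hsumμ hdeg₁
        rw [mul_comm (monomial μ (1:k)) r₁] at h2'
        exact degLt_mono (by omega) h2'
      have h3 : DegLt (p * b a + ∑ i ∈ s, p * b i) (r₁ * r) := degLt_mul hdeg₁ hdeg
      exact degLt_add (degLt_add h1 h2) h3

lemma sum_single_univ (b : Fin n →₀ ℕ) (c : ℕ) :
    (∑ i, Finsupp.single i (c * b i)) = c • b := by
  ext j
  simp [Finsupp.finset_sum_apply, Finsupp.single_apply, Finset.sum_ite_eq, Finsupp.smul_apply]

/-- Key coefficient computation: the coefficient of `p • a` in `aeval g f` equals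
`coeff a f` when `a` has maximal degree in `f`. -/
lemma coeff_aeval_gpoly (hp2 : 2 ≤ p) (f : MvPolynomial (Fin n) k) (a : Fin n →₀ ℕ)
    (hmax : ∀ b ∈ f.support, (∑ i, b i) ≤ ∑ i, a i) :
    coeff (p • a) (aeval (gpoly p M) f) = coeff a f := by
  classical
  have hexp : aeval (gpoly p M) f
      = ∑ b ∈ f.support, C (coeff b f) * ∏ i, gpoly p M i ^ b i := by
    conv_lhs => rw [f.as_sum]
    rw [map_sum]
    apply Finset.sum_congr rfl
    intro b _
    rw [aeval_monomial, Finsupp.prod_pow]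
    rfl
  rw [hexp]
  rw [MvPolynomial.coeff_sum]
  have hterm : ∀ b ∈ f.support,
      coeff (p • a) (C (coeff b f) * ∏ i, gpoly p M i ^ b i)
        = if b = a then coeff a f else 0 := by
    intro b hb
    obtain ⟨r, hr, hdeg⟩ := gpoly_prod p M hp2 b Finset.univ
    rw [sum_single_univ] at hr
    rw [hr, MvPolynomial.coeff_C_mul, MvPolynomial.coeff_add, MvPolynomial.coeff_monomial]
    have hrz : coeff (p • a) r = 0 := by
      by_contra hc
      have hmem : (p • a) ∈ r.support := MvPolynomial.mem_support_iff.mpr hc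
      have hlt := hdeg _ hmem
      have h1 : (∑ i, (p • a) i) = p * ∑ i, a i := by
        simp [Finsupp.smul_apply, Finset.mul_sum]
      have h2 : (∑ i, p * b i) = p * ∑ i, b i := by rw [Finset.mul_sum]
      have hble := hmax b hb
      rw [h1, h2] at hlt
      have := Nat.mul_le_mul_left p hble
      omega
    rw [hrz, add_zero]
    have hiff : p • b = p • a ↔ b = a := by
      constructor
      · intro h
        ext j
        have := DFunLike.congr_fun h j
        simp only [Finsupp.smul_apply, smul_eq_mul] at this
        exact Nat.eq_of_mul_eq_mul_left (by omega) this
      · intro h; rw [h]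
    by_cases hba : b = a
    · subst hba; simp [hiff]
    · rw [if_neg (fun h => hba (hiff.mp h)), if_neg hba, mul_zero]
  rw [Finset.sum_congr rfl hterm, Finset.sum_ite_eq' f.support a (fun b => coeff a f)]
  by_cases ha : a ∈ f.support
  · rw [if_pos ha]
  · rw [if_neg ha]
    exact (MvPolynomial.notMem_support_iff.mp ha).symm

lemma aeval_gpoly_injective (hp2 : 2 ≤ p) :
    Function.Injective (aeval (gpoly p M) :
      MvPolynomial (Fin n) k →ₐ[k] MvPolynomial (Fin n) k) := by
  classical
  refine (injective_iff_map_eq_zero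
    (aeval (gpoly p M) : MvPolynomial (Fin n) k →ₐ[k] MvPolynomial (Fin n) k)).mpr ?_
  intro f hf0
  by_contra hf
  obtain ⟨a, ha, hamax⟩ := f.support.exists_mem_eq_sup
    (MvPolynomial.support_nonempty.mpr hf) (fun m => ∑ i, m i)
  have hmax : ∀ b ∈ f.support, (∑ i, b i) ≤ ∑ i, a i := by
    intro b hb
    have h' := Finset.le_sup (f := fun m : Fin n →₀ ℕ => ∑ i, m i) hb
    rw [hamax] at h'
    exact h'
  have := coeff_aeval_gpoly p M hp2 f a hmax
  rw [hf0] at this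
  simp only [MvPolynomial.coeff_zero] at this
  exact MvPolynomial.mem_support_iff.mp ha this.symm

/-- Module-finiteness of the polynomial ring over the subalgebra generated by the `gpoly`s. -/
lemma finite_over_range (hp2 : 2 ≤ p) :
    Module.Finite
      ((aeval (gpoly p M) : MvPolynomial (Fin n) k →ₐ[k] MvPolynomial (Fin n) k).range)
      (MvPolynomial (Fin n) k) := by
  classical
  have hp0 : 0 < p := by omega
  set B := (aeval (gpoly p M) : MvPolynomial (Fin n) k →ₐ[k] MvPolynomial (Fin n) k).range
    with hB
  set T : Finset (MvPolynomial (Fin n) k) :=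
    Finset.image
      (fun t : Fin n → Fin p =>
        monomial (Finsupp.equivFunOnFinite.symm fun i => ((t i : ℕ))) (1 : k))
      Finset.univ with hT
  constructor
  refine ⟨T, ?_⟩
  rw [eq_top_iff]
  intro f _
  -- first, all small monomials are in T
  have hbase : ∀ a : Fin n →₀ ℕ, (∀ i, a i < p) →
      (monomial a 1 : MvPolynomial (Fin n) k) ∈ Submodule.span B (T : Set (MvPolynomial (Fin n) k)) := by
    intro a hsm
    apply Submodule.subset_span
    rw [hT]
    simp only [Finset.coe_image, Set.mem_image, Finset.mem_coe]
    refine ⟨fun i => ⟨a i, hsm i⟩, by simp, ?_⟩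
    have h : (Finsupp.equivFunOnFinite.symm fun i => (((⟨a i, hsm i⟩ : Fin p) : ℕ))) = a := by
      show Finsupp.equivFunOnFinite.symm (fun i => a i) = a
      exact Finsupp.equivFunOnFinite_symm_coe a
    rw [h]
  -- smul lemma
  have hsmul : ∀ (x : MvPolynomial (Fin n) k) (hx : x ∈ B) (y : MvPolynomial (Fin n) k),
      (⟨x, hx⟩ : B) • y = x * y := by
    intro x hx y
    rw [Algebra.smul_def]
    rfl
  have key : ∀ (N : ℕ) (a : Fin n →₀ ℕ), (∑ i, a i) ≤ N →
      (monomial a 1 : MvPolynomial (Fin n) k) ∈ Submodule.span B (T : Set (MvPolynomial (Fin n) k)) := by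
    intro N
    induction N with
    | zero =>
      intro a ha
      apply hbase
      intro i
      have : a i ≤ ∑ l, a l := Finset.single_le_sum (fun l _ => Nat.zero_le (a l))
        (Finset.mem_univ i)
      omega
    | succ N ih =>
      intro a ha
      by_cases hsm : ∀ i, a i < p
      · exact hbase a hsm
      push_neg at hsm
      obtain ⟨i, hip⟩ := hsm
      set a' := a - Finsupp.single i p with ha'
      have haa : a' + Finsupp.single i p = a := by
        ext j
        rw [ha']
        simp only [Finsupp.add_apply, Finsupp.tsub_apply, Finsupp.single_apply]
        by_cases hji : i = j
        · subst hji; simp; omega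
        · simp [hji]
      have hsum' : (∑ j, a' j) + p = ∑ j, a j := by
        conv_rhs => rw [← haa]
        simp only [Finsupp.add_apply, Finset.sum_add_distrib]
        congr 1
        simp [Finsupp.single_apply]
      have hgmem : gpoly p M i ∈ B := ⟨X i, by simp⟩
      have hCmem : ∀ j, C (M i j) ∈ B := fun j => ⟨C (M i j), by simp⟩
      have hid : (monomial a 1 : MvPolynomial (Fin n) k)
          = gpoly p M i * monomial a' 1
            - ∑ j, C (M i j) * monomial (a' + Finsupp.single j 1) 1 := by
        rw [gpoly, add_mul, ell, Finset.sum_mul]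
        have hX : (X i ^ p : MvPolynomial (Fin n) k) * monomial a' 1 = monomial a 1 := by
          rw [MvPolynomial.X_pow_eq_monomial, MvPolynomial.monomial_mul, one_mul, ← haa,
            add_comm]
        have hXj : ∀ j, (C (M i j) * X j : MvPolynomial (Fin n) k) * monomial a' 1
            = C (M i j) * monomial (a' + Finsupp.single j 1) 1 := by
          intro j
          rw [mul_assoc]
          congr 1
          rw [MvPolynomial.X, MvPolynomial.monomial_mul, one_mul, add_comm]
        rw [hX]
        rw [Finset.sum_congr rfl fun j _ => hXj j]
        ring
      rw [hid]
      apply Submodule.sub_mem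
      · have := ih a' (by omega)
        have h := Submodule.smul_mem (Submodule.span B (T : Set (MvPolynomial (Fin n) k)))
          (⟨gpoly p M i, hgmem⟩ : B) this
        rwa [hsmul] at h
      · apply Submodule.sum_mem
        intro j _
        have hsj : (∑ l, ((a' + Finsupp.single j 1 : Fin n →₀ ℕ)) l) ≤ N := by
          simp only [Finsupp.add_apply, Finset.sum_add_distrib]
          have : (∑ l, (Finsupp.single j 1 : Fin n →₀ ℕ) l) = 1 := by
            simp [Finsupp.single_apply]
          omega
        have := ih _ hsj
        have h := Submodule.smul_mem (Submodule.span B (T : Set (MvPolynomial (Fin n) k)))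
          (⟨C (M i j), hCmem j⟩ : B) this
        rwa [hsmul] at h
  -- now general polynomials
  rw [f.as_sum]
  apply Submodule.sum_mem
  intro b _
  have : (monomial b (coeff b f) : MvPolynomial (Fin n) k)
      = C (coeff b f) * monomial b 1 := by
    rw [MvPolynomial.C_mul_monomial, mul_one]
  rw [this]
  have hCmem : C (coeff b f) ∈ B := ⟨C (coeff b f), by simp⟩
  have h := Submodule.smul_mem (Submodule.span B (T : Set (MvPolynomial (Fin n) k)))
    (⟨C (coeff b f), hCmem⟩ : B) (key (∑ i, b i) b le_rfl)
  rwa [hsmul] at h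

end FrobLinAux

open FrobLinAux in
/-- Over an algebraically closed field of characteristic `p > 0`, the sum of the componentwise
Frobenius map and a linear map is surjective. -/
theorem frobenius_add_linear_surjective
    (k : Type*) [Field k] [IsAlgClosed k] (p : ℕ) [CharP k p] (hp : 0 < p)
    (n : ℕ) (L : (Fin n → k) →ₗ[k] (Fin n → k)) :
    Function.Surjective (fun v : Fin n → k => (fun i => (v i) ^ p) + L v) := by
  classical
  have hprime : p.Prime := by
    rcases CharP.char_is_prime_or_zero k p with h | h
    · exact h
    · omega
  have hp2 : 2 ≤ p := hprime.two_le
  intro w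
  set M : Fin n → Fin n → k := fun i j => L (fun l => if j = l then 1 else 0) i with hM
  set g := gpoly p M with hg
  set φ : MvPolynomial (Fin n) k →ₐ[k] MvPolynomial (Fin n) k := aeval g with hφ
  set B := φ.range with hB
  haveI hfin : Module.Finite B (MvPolynomial (Fin n) k) := finite_over_range p M hp2
  haveI : Algebra.IsIntegral B (MvPolynomial (Fin n) k) :=
    Algebra.IsIntegral.of_finite B (MvPolynomial (Fin n) k)
  have hinj : Function.Injective φ := aeval_gpoly_injective p M hp2
  set ψ : MvPolynomial (Fin n) k ≃ₐ[k] B := AlgEquiv.ofInjective φ hinj with hψ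
  set I0 : Ideal (MvPolynomial (Fin n) k) := vanishingIdeal k {w} with hI0
  haveI : I0.IsMaximal := inferInstance
  set P : Ideal B := Ideal.comap (ψ.symm : B ≃ₐ[k] MvPolynomial (Fin n) k) I0 with hP
  haveI hPmax : P.IsMaximal :=
    Ideal.comap_isMaximal_of_surjective _ (AlgEquiv.surjective ψ.symm)
  have hker : RingHom.ker (algebraMap B (MvPolynomial (Fin n) k)) ≤ P := by
    intro x hx
    have hx0 : (x : MvPolynomial (Fin n) k) = 0 := hx
    have : x = 0 := Subtype.ext hx0
    rw [this]
    exact P.zero_mem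
  obtain ⟨Q, hQmax, hQ⟩ := Ideal.exists_ideal_over_maximal_of_isIntegral P hker
  obtain ⟨v, hv⟩ := (MvPolynomial.isMaximal_iff_eq_vanishingIdeal_singleton (I := Q)).mp hQmax
  refine ⟨v, ?_⟩
  have heval : ∀ i, eval v (g i) = w i := by
    intro i
    have h1 : (X i - C (w i) : MvPolynomial (Fin n) k) ∈ I0 := by
      rw [hI0, MvPolynomial.mem_vanishingIdeal_singleton_iff]
      simp
    have h2 : ψ (X i - C (w i)) ∈ P := by
      rw [hP, Ideal.mem_comap]
      simpa using h1
    have h3 : algebraMap B (MvPolynomial (Fin n) k) (ψ (X i - C (w i))) ∈ Q := by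
      rw [← hQ] at h2
      exact Ideal.mem_comap.mp h2
    have h4 : algebraMap B (MvPolynomial (Fin n) k) (ψ (X i - C (w i)))
        = g i - C (w i) := by
      have : (ψ (X i - C (w i)) : MvPolynomial (Fin n) k) = φ (X i - C (w i)) :=
        AlgEquiv.ofInjective_apply φ hinj _
      rw [show algebraMap B (MvPolynomial (Fin n) k) (ψ (X i - C (w i)))
          = ((ψ (X i - C (w i))) : MvPolynomial (Fin n) k) from rfl, this]
      rw [hφ, map_sub, aeval_X, aeval_C]
      rfl
    rw [h4] at h3
    rw [hv, MvPolynomial.mem_vanishingIdeal_singleton_iff] at h3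
    rw [map_sub, aeval_C] at h3
    have := sub_eq_zero.mp h3
    exact this
  funext i
  have h5 : eval v (g i) = v i ^ p + ∑ j, M i j * v j := eval_gpoly p M v i
  have h6 : L v i = ∑ j, M i j * v j := by
    have := LinearMap.pi_apply_eq_sum_univ L v
    rw [this]
    simp only [Finset.sum_apply, Pi.smul_apply, smul_eq_mul]
    apply Finset.sum_congr rfl
    intro j _
    rw [hM, mul_comm]
  have := heval i
  rw [h5] at this
  simp only [Pi.add_apply]
  rw [h6]
  exact this
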